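/- Let c ≥ 0, b ≥ 0, C₁ > 0, and ρ, δ, η, β > 0 with ηβ ≤ 1, and set B = ηβ + 1. Define H₁(τ) = c/C₁ + b/(C₁τ) + ρδ(B^τ − 1)/β − ρηδτ for real τ > 0. Then H₁ is strictly increasing on (τ₁, ∞), where τ₁ = max{1, (1/(ρδη log B))·(b/C₁ + ρηδ) − 1/(ηβ)}. -/

import Mathlib

/-- the part of the control objective outside the square root,
`H₁(τ) = c/C₁ + b/(C₁τ) + ρδ(B^τ - 1)/β - ρηδτ` with `B = ηβ + 1`, is strictly
increasing on `(τ₁, ∞)`, where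
`τ₁ = max{1, (1/(ρδη log B))(b/C₁ + ρηδ) - 1/(ηβ)}`. -/
theorem H1_strictMonoOn
    (c b C₁ ρ δ η β : ℝ)
    (hc : 0 ≤ c) (hb : 0 ≤ b) (hC₁ : 0 < C₁)
    (hρ : 0 < ρ) (hδ : 0 < δ) (hη : 0 < η) (hβ : 0 < β)
    (hηβ : η * β ≤ 1) :
    StrictMonoOn
      (fun τ : ℝ =>
        c / C₁ + b / (C₁ * τ) + ρ * δ * ((η * β + 1) ^ τ - 1) / β - ρ * η * δ * τ)
      (Set.Ioi (max 1
        (1 / (ρ * δ * η * Real.log (η * β + 1)) * (b / C₁ + ρ * η * δ) -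
          1 / (η * β)))) := by
  set T : ℝ := max 1
      (1 / (ρ * δ * η * Real.log (η * β + 1)) * (b / C₁ + ρ * η * δ) - 1 / (η * β)) with hT
  have hB1 : (1:ℝ) < η * β + 1 := by nlinarith
  have hB0 : (0:ℝ) < η * β + 1 := by linarith
  have hL : 0 < Real.log (η * β + 1) := Real.log_pos hB1
  -- derivative at each point x > 0
  have hderiv : ∀ x : ℝ, 0 < x → HasDerivAt
      (fun τ : ℝ =>
        c / C₁ + b / (C₁ * τ) + ρ * δ * ((η * β + 1) ^ τ - 1) / β - ρ * η * δ * τ)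
      (b * (-C₁ / (C₁ * x) ^ 2) + ρ * δ * ((η * β + 1) ^ x * Real.log (η * β + 1)) / β
        - ρ * η * δ) x := by
    intro x hx
    have h1 : HasDerivAt (fun τ : ℝ => C₁ * τ) C₁ x := by
      simpa using (hasDerivAt_id x).const_mul C₁
    have h2 : HasDerivAt (fun τ : ℝ => b / (C₁ * τ)) (b * (-C₁ / (C₁ * x) ^ 2)) x := by
      have := (h1.inv (by positivity)).const_mul b
      simpa [div_eq_mul_inv] using this
    have h3 : HasDerivAt (fun τ : ℝ => (η * β + 1) ^ τ)
        ((η * β + 1) ^ x * Real.log (η * β + 1)) x :=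
      (Real.hasStrictDerivAt_const_rpow hB0 x).hasDerivAt
    have h4 : HasDerivAt (fun τ : ℝ => ρ * δ * ((η * β + 1) ^ τ - 1) / β)
        (ρ * δ * ((η * β + 1) ^ x * Real.log (η * β + 1)) / β) x := by
      have := ((h3.sub_const 1).const_mul (ρ * δ)).div_const β
      simpa using this
    have h5 : HasDerivAt (fun τ : ℝ => ρ * η * δ * τ) (ρ * η * δ) x := by
      simpa using (hasDerivAt_id x).const_mul (ρ * η * δ)
    have := (((hasDerivAt_const x (c / C₁)).add h2).add h4).sub h5
    rw [zero_add] at this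
    exact this
  apply strictMonoOn_of_deriv_pos (convex_Ioi T)
  · -- continuity
    apply ContinuousOn.sub
    apply ContinuousOn.add
    apply ContinuousOn.add continuousOn_const
    · apply ContinuousOn.div continuousOn_const (by fun_prop)
      intro x hx
      have hx1 : (1:ℝ) < x := lt_of_le_of_lt (le_max_left _ _) hx
      positivity
    · apply ContinuousOn.div _ continuousOn_const (fun _ _ => ne_of_gt hβ)
      apply ContinuousOn.mul continuousOn_const
      apply ContinuousOn.sub _ continuousOn_const
      exact fun x hx => ((Real.continuousAt_const_rpow (ne_of_gt hB0)).continuousWithinAt)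
    · fun_prop
  · intro x hx
    rw [interior_Ioi] at hx
    have hx1 : (1:ℝ) < x := lt_of_le_of_lt (le_max_left _ _) hx
    have hx0 : (0:ℝ) < x := by linarith
    rw [HasDerivAt.deriv (hderiv x hx0)]
    -- Bernoulli: 1 + x*(η*β) ≤ (1 + η*β)^x
    have hbern : 1 + x * (η * β) ≤ (η * β + 1) ^ x := by
      have := one_add_mul_self_le_rpow_one_add (s := η * β) (by nlinarith) hx1.le
      rw [add_comm (η*β) 1]
      exact this
    -- from x > T ≥ threshold
    have hthr : 1 / (ρ * δ * η * Real.log (η * β + 1)) * (b / C₁ + ρ * η * δ)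
        - 1 / (η * β) < x := lt_of_le_of_lt (le_max_right _ _) hx
    have hpos : 0 < ρ * δ * η * Real.log (η * β + 1) := by positivity
    have hkey : b / C₁ + ρ * η * δ <
        ρ * δ * η * Real.log (η * β + 1) * x + ρ * δ * Real.log (η * β + 1) / β := by
      have h := (sub_lt_iff_lt_add).mp hthr
      have h2 : 1 / (ρ * δ * η * Real.log (η * β + 1)) * (b / C₁ + ρ * η * δ)
          < x + 1 / (η * β) := by linarith
      have h3 : (b / C₁ + ρ * η * δ) / (ρ * δ * η * Real.log (η * β + 1))
          < x + 1 / (η * β) := by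
        rw [div_eq_mul_inv, mul_comm]
        simpa [one_div] using h2
      have h4 := (div_lt_iff₀ hpos).mp h3
      calc b / C₁ + ρ * η * δ < (x + 1 / (η * β)) * (ρ * δ * η * Real.log (η * β + 1)) := h4
        _ = ρ * δ * η * Real.log (η * β + 1) * x + ρ * δ * Real.log (η * β + 1) / β := by
            field_simp
    -- bound exp term
    have hexp : ρ * δ * Real.log (η * β + 1) / β + ρ * δ * η * Real.log (η * β + 1) * x
        ≤ ρ * δ * ((η * β + 1) ^ x * Real.log (η * β + 1)) / β := by
      rw [div_add' _ _ _ (ne_of_gt hβ), div_le_div_iff₀ hβ hβ]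
      have : ρ * δ * Real.log (η * β + 1) * (1 + x * (η * β))
          ≤ ρ * δ * Real.log (η * β + 1) * ((η * β + 1) ^ x) := by
        apply mul_le_mul_of_nonneg_left hbern (by positivity)
      nlinarith
    -- bound b term : b*(-C₁/(C₁*x)^2) ≥ -b/C₁
    have hbterm : -(b / C₁) ≤ b * (-C₁ / (C₁ * x) ^ 2) := by
      have he : b * (-C₁ / (C₁ * x) ^ 2) = -(b * C₁ / (C₁ * x) ^ 2) := by ring
      rw [he, neg_le_neg_iff, div_le_div_iff₀ (by positivity) hC₁]
      nlinarith [mul_nonneg (mul_nonneg hb (sq_nonneg C₁)) (by nlinarith : (0:ℝ) ≤ x ^ 2 - 1)]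
    nlinarith [hexp, hkey, hbterm]
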